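/- Let A be a commutative ring and B a finitely presented commutative A-algebra such that the B-module of Kähler differentials Ω_{B/A} is generated by a single element (for instance when B is generated by one element as an A-algebra). Then the Kähler different, the Noether different and the annihilator of Ω_{B/A} coincide: F₀(Ω_{B/A}) = μ(Ann(J)) = Ann_B(Ω_{B/A}). -/

import Mathlib

open TensorProduct

/-- The 0-th Fitting ideal of a module `M` over `R`: for a finitely presented module it is
the ideal generated by the `n × n` minors of a relation matrix of any presentation of `M`
with `n` generators; equivalently (by Fitting's lemma, which guarantees independence of the
presentation) the ideal generated by the determinants of all `n × n` matrices whose rows are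
relations among the `n` generators.  We take the supremum over all finite presentations. -/
noncomputable def fittingIdeal0 (R M : Type*) [CommRing R] [AddCommGroup M] [Module R M] :
    Ideal R :=
  ⨆ (n : ℕ) (f : (Fin n → R) →ₗ[R] M) (_ : Function.Surjective f),
    Ideal.span { d : R | ∃ P : Matrix (Fin n) (Fin n) R,
      (∀ i, P i ∈ LinearMap.ker f) ∧ d = P.det }

/-- The 0-th Fitting ideal is always contained in the annihilator. -/
lemma fittingIdeal0_le_annihilator (R M : Type*) [CommRing R] [AddCommGroup M] [Module R M] :
    fittingIdeal0 R M ≤ Module.annihilator R M := by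
  refine iSup_le fun n => iSup_le fun f => iSup_le fun hf => Ideal.span_le.2 ?_
  rintro d ⟨P, hP, rfl⟩
  rw [SetLike.mem_coe, Module.mem_annihilator]
  intro m
  obtain ⟨v, rfl⟩ := hf m
  have hker : ∀ u : Fin n → R, f (Matrix.vecMul u P) = 0 := by
    intro u
    have : Matrix.vecMul u P = ∑ i, u i • P i := by
      funext j
      simp [Matrix.vecMul, dotProduct, Finset.sum_apply]
    rw [this, map_sum]
    simp only [map_smul]
    refine Finset.sum_eq_zero fun i _ => ?_
    rw [LinearMap.mem_ker.mp (hP i), smul_zero]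
  have h1 : Matrix.vecMul v (P.adjugate * P) = P.det • v := by
    rw [Matrix.adjugate_mul]
    funext j
    simp [Matrix.vecMul, dotProduct, Matrix.one_apply, Finset.mul_sum,
      mul_ite, mul_comm]
  calc P.det • f v = f (P.det • v) := (map_smul f _ _).symm
    _ = f (Matrix.vecMul (Matrix.vecMul v P.adjugate) P) := by
        rw [Matrix.vecMul_vecMul, h1]
    _ = 0 := hker _

/-- For a module generated by a single element, the annihilator is contained in the
0-th Fitting ideal. -/
lemma annihilator_le_fittingIdeal0 (R M : Type*) [CommRing R] [AddCommGroup M] [Module R M]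
    (g : M) (hg : Submodule.span R {g} = ⊤) :
    Module.annihilator R M ≤ fittingIdeal0 R M := by
  intro a ha
  set f : (Fin 1 → R) →ₗ[R] M := (LinearMap.proj 0 : (Fin 1 → R) →ₗ[R] R).smulRight g with hf
  have hfs : Function.Surjective f := by
    intro m
    have hm : m ∈ Submodule.span R {g} := hg ▸ Submodule.mem_top
    obtain ⟨b, hb⟩ := Submodule.mem_span_singleton.1 hm
    exact ⟨fun _ => b, hb⟩
  have hmem : a ∈ Ideal.span { d : R | ∃ P : Matrix (Fin 1) (Fin 1) R,
      (∀ i, P i ∈ LinearMap.ker f) ∧ d = P.det } := by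
    refine Ideal.subset_span ⟨Matrix.of fun _ _ => a, fun i => ?_, by
      simp [Matrix.det_fin_one]⟩
    rw [LinearMap.mem_ker]
    have hfi : f (Matrix.of (fun _ _ => a) i) = a • g := by
      simp [hf]
    rw [hfi]
    exact Module.mem_annihilator.1 ha g
  have hle : Ideal.span { d : R | ∃ P : Matrix (Fin 1) (Fin 1) R,
      (∀ i, P i ∈ LinearMap.ker f) ∧ d = P.det } ≤ fittingIdeal0 R M := by
    refine le_iSup_of_le 1 ?_
    refine le_iSup_of_le f ?_
    exact le_iSup_of_le hfs le_rfl
  exact hle hmem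

/-- Let `B` be a finitely presented commutative `A`-algebra such that
`Ω[B⁄A]` is generated by a single element.  Then the Kähler different `F₀(Ω[B⁄A])`, the
Noether different `μ(Ann J)` and the annihilator `Ann_B(Ω[B⁄A])` coincide. -/
theorem differents_eq_of_span_singleton
    (A B : Type*) [CommRing A] [CommRing B] [Algebra A B]
    [Algebra.FinitePresentation A B]
    (g : Ω[B⁄A]) (hg : Submodule.span B {g} = ⊤) :
    fittingIdeal0 B (Ω[B⁄A])
        = Ideal.map (Algebra.TensorProduct.lmul' A : B ⊗[A] B →ₐ[A] B)
            (RingHom.ker (Algebra.TensorProduct.lmul' A : B ⊗[A] B →ₐ[A] B)).annihilator ∧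
      Ideal.map (Algebra.TensorProduct.lmul' A : B ⊗[A] B →ₐ[A] B)
          (RingHom.ker (Algebra.TensorProduct.lmul' A : B ⊗[A] B →ₐ[A] B)).annihilator
        = Module.annihilator B (Ω[B⁄A]) := by
  set μ : B ⊗[A] B →ₐ[A] B := Algebra.TensorProduct.lmul' A with hμ
  set J : Ideal (B ⊗[A] B) := RingHom.ker μ with hJ
  have hJK : J = KaehlerDifferential.ideal A B := rfl
  -- The B ⊗ B-module smul on Ω restricted to B.
  have hsmul : ∀ (c : B ⊗[A] B) (x : J),
      c • (KaehlerDifferential.ideal A B).toCotangent x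
        = (KaehlerDifferential.ideal A B).toCotangent (c • x) :=
    fun c x => ((KaehlerDifferential.ideal A B).toCotangent.map_smul c x).symm
  have hBsmul : ∀ (b : B) (x : J),
      b • ((KaehlerDifferential.ideal A B).toCotangent x : Ω[B⁄A])
        = (KaehlerDifferential.ideal A B).toCotangent ((b ⊗ₜ[A] (1 : B)) • x) := by
    intro b x
    have h1 : b • ((KaehlerDifferential.ideal A B).toCotangent x : Ω[B⁄A])
        = (algebraMap B (B ⊗[A] B) b) • (KaehlerDifferential.ideal A B).toCotangent x :=
      (algebraMap_smul (B ⊗[A] B) b ((KaehlerDifferential.ideal A B).toCotangent x)).symm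
    rw [h1, hsmul]
    rfl
  -- easy direction : μ (Ann J) ≤ Ann Ω
  have hle : Ideal.map μ J.annihilator ≤ Module.annihilator B (Ω[B⁄A]) := by
    rw [Ideal.map_le_iff_le_comap]
    intro σ hσ
    rw [Ideal.mem_comap, Module.mem_annihilator]
    intro m
    obtain ⟨x, rfl⟩ := Ideal.toCotangent_surjective (KaehlerDifferential.ideal A B) m
    refine (hBsmul (μ σ) x).trans ((Ideal.toCotangent_eq_zero ..).2 ?_)
    have h1 : ((μ σ ⊗ₜ[A] (1 : B)) • x : J) = (μ σ ⊗ₜ[A] (1 : B)) * (x : B ⊗[A] B) := rfl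
    rw [h1, pow_two]
    have hσx : σ * (x : B ⊗[A] B) = 0 := Submodule.mem_annihilator.1 hσ _ x.2
    have h2 : (μ σ ⊗ₜ[A] (1 : B)) * (x : B ⊗[A] B)
        = (μ σ ⊗ₜ[A] (1 : B) - σ) * (x : B ⊗[A] B) := by
      rw [sub_mul, hσx, sub_zero]
    rw [h2]
    refine Ideal.mul_mem_mul ?_ x.2
    show μ _ = 0
    rw [map_sub]
    simp [μ]
  -- hard direction : Ann Ω ≤ μ (Ann J)
  have hge : Module.annihilator B (Ω[B⁄A]) ≤ Ideal.map μ J.annihilator := by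
    intro a ha
    -- a lift x₀ of the generator g
    obtain ⟨x₀, hx₀⟩ := Ideal.toCotangent_surjective (KaehlerDifferential.ideal A B) g
    -- J is finitely generated
    have hJfg : J.FG := by
      have : Algebra.FinitePresentation A (B ⊗[A] B) :=
        Algebra.FinitePresentation.trans A B (B ⊗[A] B)
    -- the instance `Algebra.FinitePresentation B (B ⊗[A] B)` comes from base change
      have := Algebra.FinitePresentation.ker_fG_of_surjective μ
        (fun b => ⟨b ⊗ₜ[A] (1 : B), by simp [μ]⟩)
      exact this
    -- every element of J is congruent to a multiple of x₀ mod J²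
    have hcyc : ∀ y ∈ J, ∃ c : B ⊗[A] B, y - c * (x₀ : B ⊗[A] B) ∈ J * J := by
      intro y hy
      have hmem : ∃ b : B, b • g = (KaehlerDifferential.ideal A B).toCotangent ⟨y, hy⟩ :=
        Submodule.mem_span_singleton.1 (hg ▸ Submodule.mem_top)
      obtain ⟨b, hb⟩ := hmem
      refine ⟨b ⊗ₜ[A] (1 : B), ?_⟩
      have : (KaehlerDifferential.ideal A B).toCotangent
          (⟨y, hy⟩ - (b ⊗ₜ[A] (1 : B)) • x₀) = 0 := by
        rw [map_sub, ← hBsmul, hx₀]; exact sub_eq_zero.2 hb.symm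
      rw [Ideal.toCotangent_eq_zero] at this
      rw [← pow_two]
      exact this
    -- Nakayama : find δ with μ δ = 1 and δ • J ⊆ (x₀)
    set X : Submodule (B ⊗[A] B) (B ⊗[A] B) :=
      Submodule.span (B ⊗[A] B) {(x₀ : B ⊗[A] B)} with hX
    have hxX : (x₀ : B ⊗[A] B) ∈ X := Submodule.subset_span rfl
    have hle' : Submodule.map X.mkQ (J : Submodule (B ⊗[A] B) (B ⊗[A] B))
        ≤ J • Submodule.map X.mkQ (J : Submodule (B ⊗[A] B) (B ⊗[A] B)) := by
      rintro _ ⟨y, hy, rfl⟩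
      obtain ⟨c, hc⟩ := hcyc y hy
      have h0 : X.mkQ y = X.mkQ (y - c * x₀) := by
        have hz : X.mkQ (c * (x₀ : B ⊗[A] B)) = 0 := by
          rw [Submodule.mkQ_apply, Submodule.Quotient.mk_eq_zero]
          exact X.smul_mem c hxX
        rw [map_sub, hz, sub_zero]
      rw [h0]
      have hmem : y - c * (x₀ : B ⊗[A] B) ∈ J • (J : Submodule (B ⊗[A] B) (B ⊗[A] B)) := by
        rw [Ideal.smul_eq_mul]; exact hc
      have := Submodule.mem_map_of_mem (f := X.mkQ) hmem
      rwa [Submodule.map_smul''] at this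
    obtain ⟨δ, hδ1, hδ0⟩ :=
      Submodule.exists_sub_one_mem_and_smul_eq_zero_of_fg_of_le_smul J
        (Submodule.map X.mkQ (J : Submodule (B ⊗[A] B) (B ⊗[A] B)))
        (Submodule.FG.map _ hJfg) hle'
    have hδJ : ∀ y ∈ J, ∃ c : B ⊗[A] B, δ * y = c * (x₀ : B ⊗[A] B) := by
      intro y hy
      have h0 : δ • X.mkQ y = 0 := hδ0 _ (Submodule.mem_map_of_mem hy)
      have h0' : X.mkQ (δ • y) = 0 := by rw [map_smul, h0]
      rw [Submodule.mkQ_apply, Submodule.Quotient.mk_eq_zero] at h0'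
      obtain ⟨c, hc⟩ := Submodule.mem_span_singleton.1 h0'
      exact ⟨c, hc.symm⟩
    have hμδ : μ δ = 1 := by
      have : μ (δ - 1) = 0 := hδ1
      rw [map_sub, map_one, sub_eq_zero] at this
      exact this
    -- a • g = 0 gives (a ⊗ 1) * x₀ ∈ J²
    have hax₀ : (a ⊗ₜ[A] (1 : B)) * (x₀ : B ⊗[A] B) ∈ J * J := by
      have h0 : (KaehlerDifferential.ideal A B).toCotangent ((a ⊗ₜ[A] (1 : B)) • x₀) = 0 := by
        rw [← hBsmul, hx₀]
        exact Module.mem_annihilator.1 ha g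
      rw [Ideal.toCotangent_eq_zero] at h0
      rw [← pow_two]
      exact h0
    -- push down with δ twice
    have hstep1 : ∀ w ∈ J * J, δ * w ∈ Ideal.span {(x₀ : B ⊗[A] B)} * J := by
      intro w hw
      refine Submodule.mul_induction_on hw ?_ ?_
      · intro y hy z hz
        obtain ⟨c, hc⟩ := hδJ y hy
        have he : δ * (y * z) = (c * x₀) * z := by rw [← hc]; ring
        rw [he]
        exact Ideal.mul_mem_mul (Ideal.mem_span_singleton.2 ⟨c, mul_comm c _⟩) hz
      · intro u v hu hv
        rw [mul_add]
        exact add_mem hu hv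
    have hstep2 : ∀ w ∈ Ideal.span {(x₀ : B ⊗[A] B)} * J,
        δ * w ∈ Ideal.span {(x₀ : B ⊗[A] B) * (x₀ : B ⊗[A] B)} := by
      intro w hw
      refine Submodule.mul_induction_on hw ?_ ?_
      · intro s hs z hz
        obtain ⟨c', hc'⟩ := Ideal.mem_span_singleton.1 hs
        obtain ⟨c, hc⟩ := hδJ z hz
        refine Ideal.mem_span_singleton.2 ⟨c' * c, ?_⟩
        rw [hc']
        calc δ * ((x₀ : B ⊗[A] B) * c' * z) = (c' * x₀) * (δ * z) := by ring
          _ = (c' * x₀) * (c * x₀) := by rw [hc]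
          _ = (x₀ : B ⊗[A] B) * x₀ * (c' * c) := by ring
      · intro u v hu hv
        rw [mul_add]
        exact add_mem hu hv
    obtain ⟨c₀, hc₀⟩ := Ideal.mem_span_singleton.1
      (hstep2 _ (hstep1 _ hax₀))
    -- the element σ of Ann J mapping to a
    set σ : B ⊗[A] B := δ * δ * δ * (a ⊗ₜ[A] (1 : B)) - c₀ * (δ * (x₀ : B ⊗[A] B)) with hσdef
    have hσJ : σ ∈ J.annihilator := by
      rw [Submodule.mem_annihilator]
      intro y hy
      obtain ⟨c, hc⟩ := hδJ y hy
      rw [smul_eq_mul, hσdef]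
      have hc₀' : δ * (δ * ((a ⊗ₜ[A] (1:B)) * (x₀ : B ⊗[A] B)))
          = (x₀ : B ⊗[A] B) * (x₀ : B ⊗[A] B) * c₀ := hc₀
      linear_combination (δ * δ * (a ⊗ₜ[A] (1:B)) - c₀ * (x₀ : B ⊗[A] B)) * hc + c * hc₀'
    have hμσ : μ σ = a := by
      have hμx₀ : μ (x₀ : B ⊗[A] B) = 0 := x₀.2
      simp [hσdef, hμδ, hμx₀, μ]
    exact hμσ ▸ Ideal.mem_map_of_mem μ hσJ
  constructor
  · exact le_antisymm
      ((fittingIdeal0_le_annihilator B (Ω[B⁄A])).trans hge)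
      (hle.trans (annihilator_le_fittingIdeal0 B (Ω[B⁄A]) g hg))
  · exact le_antisymm hle hge
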